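/- Let 𝔥 be a Lie algebra that is an ideal of codimension 1 in 𝔤, so 𝔤 = 𝔥 ⊕ ℝv as vector spaces, and let α ∈ 𝔥* with dα (the Chevalley-Eilenberg differential on 𝔥) a symplectic form on 𝔥 of dimension 2n. Let Π = ker α ⊂ 𝔥 and let w ≠ 0 span the kernel of the restriction of dα to Π. Let α₊ ∈ 𝔤* be the extension of α with α₊(v) = 0. Then α₊ ∧ (d_𝔤 α₊)^n ≠ 0 on 𝔤 if and only if [v, w] ∉ Π. -/

import Mathlib

open scoped TensorProduct

variable {V : Type*} [AddCommGroup V] [Module ℝ V]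

noncomputable def wedgeF {k l : ℕ} (f : V [⋀^Fin k]→ₗ[ℝ] ℝ) (g : V [⋀^Fin l]→ₗ[ℝ] ℝ) :
    V [⋀^Fin (k + l)]→ₗ[ℝ] ℝ :=
  ((TensorProduct.lid ℝ ℝ).toLinearMap.compAlternatingMap (f.domCoprod g)).domDomCongr
    finSumFinEquiv

noncomputable def wpowF (ω : V [⋀^Fin 2]→ₗ[ℝ] ℝ) : (n : ℕ) → V [⋀^Fin (2 * n)]→ₗ[ℝ] ℝ
  | 0 => AlternatingMap.constOfIsEmpty ℝ V (Fin 0) 1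
  | n + 1 => wedgeF (wpowF ω n) ω

noncomputable def oneAlt (α : Module.Dual ℝ V) : V [⋀^Fin 1]→ₗ[ℝ] ℝ :=
  AlternatingMap.ofSubsingleton ℝ V ℝ 0 α

noncomputable def bilinToAlt (B : V →ₗ[ℝ] V →ₗ[ℝ] ℝ) (hB : ∀ x, B x x = 0) :
    V [⋀^Fin 2]→ₗ[ℝ] ℝ where
  toFun v := B (v 0) (v 1)
  map_update_add' := by
    intro _ v i x y
    fin_cases i <;> simp
  map_update_smul' := by
    intro _ v i c x
    fin_cases i <;> simp
  map_eq_zero_of_eq' := by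
    intro v i j hij hne
    have h01 : v 0 = v 1 := by
      fin_cases i <;> fin_cases j <;> simp_all
    show B (v 0) (v 1) = 0
    rw [h01]; exact hB _

variable {L : Type*} [LieRing L] [LieAlgebra ℝ L]

noncomputable def ceD (α : Module.Dual ℝ L) : L [⋀^Fin 2]→ₗ[ℝ] ℝ :=
  bilinToAlt
    (LinearMap.mk₂ ℝ (fun x y => -α ⁅x, y⁆)
      (fun x x' y => by simp [add_lie]; exact add_comm _ _)
      (fun c x y => by simp [smul_lie])
      (fun x y y' => by simp [lie_add]; exact add_comm _ _)
      (fun c x y => by simp [lie_smul]))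
    (fun x => by simp)

/-- closedness of a 2-cochain under the Chevalley–Eilenberg differential -/
def IsCEClosed (ω : L [⋀^Fin 2]→ₗ[ℝ] ℝ) : Prop :=
  ∀ x y z : L, ω ![⁅x, y⁆, z] - ω ![⁅x, z⁆, y] + ω ![⁅y, z⁆, x] = 0


section Generic

open Equiv AlternatingMap

lemma two_tuple (y : Fin 2 → V) : y = ![y 0, y 1] := by
  funext i; fin_cases i <;> rfl

lemma wedgeF_apply {k l : ℕ} (f : V [⋀^Fin k]→ₗ[ℝ] ℝ) (g : V [⋀^Fin l]→ₗ[ℝ] ℝ)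
    (z : Fin (k + l) → V) :
    wedgeF f g z = ∑ σ : Perm.ModSumCongr (Fin k) (Fin l),
      (TensorProduct.lid ℝ ℝ).toLinearMap (domCoprod.summand f g σ (z ∘ finSumFinEquiv)) := by
  show (TensorProduct.lid ℝ ℝ).toLinearMap ((f.domCoprod g) (z ∘ finSumFinEquiv)) = _
  have h : (f.domCoprod g) (z ∘ finSumFinEquiv)
      = ∑ σ : Perm.ModSumCongr (Fin k) (Fin l), domCoprod.summand f g σ (z ∘ finSumFinEquiv) := by
    have h2 := AlternatingMap.domCoprod_coe f g
    calc (f.domCoprod g) (z ∘ finSumFinEquiv)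
        = (↑(f.domCoprod g) : MultilinearMap ℝ (fun _ : Fin k ⊕ Fin l => V) _) (z ∘ finSumFinEquiv) := rfl
      _ = _ := by rw [h2, MultilinearMap.sum_apply]
  rw [h, map_sum]

/-- decomposition of a permutation preserving the left part -/
lemma perm_decomp {ιa ιb : Type*} [Fintype ιa] [Fintype ιb] [DecidableEq ιa] [DecidableEq ιb]
    (σ : Perm (ιa ⊕ ιb)) (h : ∀ i, ∃ a, σ (Sum.inl i) = Sum.inl a) :
    ∃ p : Perm ιa × Perm ιb, σ = Perm.sumCongrHom ιa ιb p := by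
  classical
  set fl : ιa → ιa := fun i => (h i).choose with hfl
  have hflspec : ∀ i, σ (Sum.inl i) = Sum.inl (fl i) := fun i => (h i).choose_spec
  have hinj : Function.Injective fl := by
    intro i j hij
    have : σ (Sum.inl i) = σ (Sum.inl j) := by rw [hflspec, hflspec, hij]
    simpa using σ.injective this
  have hbij : Function.Bijective fl := (Finite.injective_iff_bijective).mp hinj
  have hr : ∀ j, ∃ b, σ (Sum.inr j) = Sum.inr b := by
    intro j
    cases hx : σ (Sum.inr j) with
    | inl a =>
      obtain ⟨i, hi⟩ := hbij.2 a
      have : σ (Sum.inr j) = σ (Sum.inl i) := by rw [hx, hflspec, hi]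
      exact absurd (σ.injective this) (by simp)
    | inr b => exact ⟨b, rfl⟩
  set fr : ιb → ιb := fun j => (hr j).choose with hfr
  have hfrspec : ∀ j, σ (Sum.inr j) = Sum.inr (fr j) := fun j => (hr j).choose_spec
  have hinjr : Function.Injective fr := by
    intro i j hij
    have : σ (Sum.inr i) = σ (Sum.inr j) := by rw [hfrspec, hfrspec, hij]
    simpa using σ.injective this
  refine ⟨(Equiv.ofBijective fl hbij, Equiv.ofBijective fr ((Finite.injective_iff_bijective).mp hinjr)), ?_⟩
  ext x
  cases x with
  | inl i => simp [Perm.sumCongrHom, hflspec i, Equiv.ofBijective]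
  | inr j => simp [Perm.sumCongrHom, hfrspec j, Equiv.ofBijective]

/-- the split lemma: if all "crossing" summands vanish, the wedge at z is the product -/
lemma wedgeF_split {k l : ℕ} (f : V [⋀^Fin k]→ₗ[ℝ] ℝ) (g : V [⋀^Fin l]→ₗ[ℝ] ℝ)
    (z : Fin (k + l) → V)
    (hvan : ∀ σ : Perm (Fin k ⊕ Fin l), (∃ i, ∃ j, σ (Sum.inl i) = Sum.inr j) →
      f (fun i => z (finSumFinEquiv (σ (Sum.inl i)))) = 0 ∨
      g (fun j => z (finSumFinEquiv (σ (Sum.inr j)))) = 0) :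
    wedgeF f g z = f (fun i => z (Fin.castAdd l i)) * g (fun j => z (Fin.natAdd k j)) := by
  classical
  rw [wedgeF_apply]
  have main := Finset.sum_eq_single_of_mem (s := Finset.univ)
    (f := fun κ => (TensorProduct.lid ℝ ℝ).toLinearMap (domCoprod.summand f g κ (z ∘ finSumFinEquiv)))
    (Quotient.mk'' (1 : Perm (Fin k ⊕ Fin l))) (Finset.mem_univ _) ?_
  · rw [main]
    rw [domCoprod.summand_mk'']
    simp only [Perm.sign_one, one_smul, MultilinearMap.domDomCongr_apply,
      MultilinearMap.domCoprod_apply]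
    rw [LinearEquiv.coe_toLinearMap, TensorProduct.lid_tmul, smul_eq_mul]
    have h1 : (fun i => (z ∘ finSumFinEquiv) ((1 : Perm (Fin k ⊕ Fin l)) (Sum.inl i)))
        = fun i => z (Fin.castAdd l i) := by
      funext i; simp
    have h2 : (fun j => (z ∘ finSumFinEquiv) ((1 : Perm (Fin k ⊕ Fin l)) (Sum.inr j)))
        = fun j => z (Fin.natAdd k j) := by
      funext j; simp
    show (f fun i => (z ∘ finSumFinEquiv) _) * (g fun j => (z ∘ finSumFinEquiv) _) = _
    rw [show (fun i => (z ∘ ⇑finSumFinEquiv) ((1 : Perm (Fin k ⊕ Fin l)) (Sum.inl i))) = fun i => z (Fin.castAdd l i) from h1,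
      show (fun j => (z ∘ ⇑finSumFinEquiv) ((1 : Perm (Fin k ⊕ Fin l)) (Sum.inr j))) = fun j => z (Fin.natAdd k j) from h2]
  · intro κ _ hκ
    induction κ using Quotient.inductionOn' with
    | h σ =>
    rw [domCoprod.summand_mk'']
    by_cases hcross : ∃ i, ∃ j, σ (Sum.inl i) = Sum.inr j
    · rcases hvan σ hcross with h | h
      · simp only [MultilinearMap.smul_apply, MultilinearMap.domDomCongr_apply,
          MultilinearMap.domCoprod_apply, Function.comp_apply,
          AlternatingMap.coe_multilinearMap]
        rw [h, TensorProduct.zero_tmul, smul_zero, _root_.map_zero]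
      · simp only [MultilinearMap.smul_apply, MultilinearMap.domDomCongr_apply,
          MultilinearMap.domCoprod_apply, Function.comp_apply,
          AlternatingMap.coe_multilinearMap]
        rw [h, TensorProduct.tmul_zero, smul_zero, _root_.map_zero]
    · exfalso
      push_neg at hcross
      have : ∀ i, ∃ a, σ (Sum.inl i) = Sum.inl a := by
        intro i
        cases hx : σ (Sum.inl i) with
        | inl a => exact ⟨a, rfl⟩
        | inr b => exact absurd hx (hcross i b)
      obtain ⟨p, hp⟩ := perm_decomp σ this
      apply hκ
      apply Quotient.sound'
      rw [QuotientGroup.leftRel_apply]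
      exact ⟨p⁻¹, by rw [map_inv, mul_one, hp]⟩

end Generic

section Generic2

open Equiv AlternatingMap

set_option linter.unusedSectionVars false

variable {V' : Type*} [AddCommGroup V'] [Module ℝ V']

lemma wedgeF_compLinearMap {k l : ℕ}
    (f : V [⋀^Fin k]→ₗ[ℝ] ℝ) (g : V [⋀^Fin l]→ₗ[ℝ] ℝ) (P : V' →ₗ[ℝ] V) :
    (wedgeF f g).compLinearMap P = wedgeF (f.compLinearMap P) (g.compLinearMap P) := by
  ext z
  rw [AlternatingMap.compLinearMap_apply, wedgeF_apply, wedgeF_apply]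
  refine Finset.sum_congr rfl fun κ _ => ?_
  induction κ using Quotient.inductionOn' with
  | h σ =>
  rw [domCoprod.summand_mk'', domCoprod.summand_mk'']
  simp only [MultilinearMap.smul_apply, MultilinearMap.domDomCongr_apply,
    MultilinearMap.domCoprod_apply, Function.comp_apply, AlternatingMap.coe_multilinearMap,
    AlternatingMap.compLinearMap_apply]

lemma wpowF_compLinearMap (ω : V [⋀^Fin 2]→ₗ[ℝ] ℝ) (P : V' →ₗ[ℝ] V) (m : ℕ) :
    (wpowF ω m).compLinearMap P = wpowF (ω.compLinearMap P) m := by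
  induction m with
  | zero =>
    ext z
    simp [wpowF]
  | succ m ih =>
    show (wedgeF (wpowF ω m) ω).compLinearMap P = wedgeF (wpowF (ω.compLinearMap P) m) _
    rw [wedgeF_compLinearMap, ih]

lemma wedgeF_zero_right {k l : ℕ} (f : V [⋀^Fin k]→ₗ[ℝ] ℝ) :
    wedgeF f (0 : V [⋀^Fin l]→ₗ[ℝ] ℝ) = 0 := by
  ext z
  rw [wedgeF_apply]
  rw [AlternatingMap.zero_apply]
  refine Finset.sum_eq_zero fun κ _ => ?_
  induction κ using Quotient.inductionOn' with
  | h σ =>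
  rw [domCoprod.summand_mk'']
  simp only [MultilinearMap.smul_apply, MultilinearMap.domDomCongr_apply,
    MultilinearMap.domCoprod_apply, AlternatingMap.coe_multilinearMap,
    AlternatingMap.zero_apply, TensorProduct.tmul_zero, smul_zero, _root_.map_zero]

lemma two_form_skew (ω : V [⋀^Fin 2]→ₗ[ℝ] ℝ) (x y : V) : ω ![x, y] = -ω ![y, x] := by
  have h := AlternatingMap.map_swap ω ![y, x] (i := 0) (j := 1) (by decide)
  rw [← h]
  congr 1
  funext i
  fin_cases i <;> rfl

/-- the value of a wedge power at a tuple depends only on the pair evaluations of the 2-form -/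
lemma wpowF_congr_entries {m : ℕ} (ω₁ ω₂ : V [⋀^Fin 2]→ₗ[ℝ] ℝ) (p : Fin (2 * m) → V)
    (h : ∀ i j : Fin (2 * m), ω₁ ![p i, p j] = ω₂ ![p i, p j]) :
    wpowF ω₁ m p = wpowF ω₂ m p := by
  classical
  set φ : (Fin (2 * m) → ℝ) →ₗ[ℝ] V := ∑ i, (LinearMap.proj i).smulRight (p i) with hφdef
  have hφ : ∀ i, φ (Pi.single i 1) = p i := by
    intro i
    rw [hφdef]
    rw [LinearMap.sum_apply]
    rw [Finset.sum_eq_single i]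
    · simp
    · intro j _ hji
      simp [Pi.single_apply, hji]
    · simp
  have hp : p = fun i => φ (Pi.single i 1) := by funext i; rw [hφ]
  have key : ω₁.compLinearMap φ = ω₂.compLinearMap φ := by
    refine Module.Basis.ext_alternating (Pi.basisFun ℝ (Fin (2 * m))) fun v _ => ?_
    have hb : ∀ i : Fin 2, φ ((Pi.basisFun ℝ (Fin (2 * m))) (v i)) = p (v i) := by
      intro i; rw [Pi.basisFun_apply, hφ]
    rw [AlternatingMap.compLinearMap_apply, AlternatingMap.compLinearMap_apply]
    have h1 : (fun i => φ ((Pi.basisFun ℝ (Fin (2 * m))) (v i))) = fun i => p (v i) := by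
      funext i; exact hb i
    rw [h1]
    rw [two_tuple (fun i => p (v i))]
    exact h (v 0) (v 1)
  calc wpowF ω₁ m p = (wpowF ω₁ m).compLinearMap φ (fun i => Pi.single i 1) := by
        rw [AlternatingMap.compLinearMap_apply, ← hp]
    _ = wpowF (ω₁.compLinearMap φ) m (fun i => Pi.single i 1) := by rw [wpowF_compLinearMap]
    _ = wpowF (ω₂.compLinearMap φ) m (fun i => Pi.single i 1) := by rw [key]
    _ = (wpowF ω₂ m).compLinearMap φ (fun i => Pi.single i 1) := by rw [wpowF_compLinearMap]
    _ = wpowF ω₂ m p := by rw [AlternatingMap.compLinearMap_apply, ← hp]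

lemma exists_dual_of_nmem [FiniteDimensional ℝ V] {W : Submodule ℝ V} {x : V} (hx : x ∉ W) :
    ∃ ψ : V →ₗ[ℝ] ℝ, ψ x = 1 ∧ ∀ y ∈ W, ψ y = 0 := by
  obtain ⟨f, hf0, hfW⟩ := Submodule.exists_dual_map_eq_bot_of_notMem hx inferInstance
  refine ⟨(f x)⁻¹ • f, by simp [inv_mul_cancel₀ hf0], ?_⟩
  intro y hy
  have : f y = 0 := by
    have : f y ∈ Submodule.map f W := Submodule.mem_map_of_mem hy
    rw [hfW] at this
    simpa using this
  simp [this]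

/-- a wedge power vanishes on a tuple containing a vector orthogonal to all entries -/
lemma wpowF_eq_zero_of_orth [FiniteDimensional ℝ V] {m : ℕ} (ω : V [⋀^Fin 2]→ₗ[ℝ] ℝ)
    (p : Fin (2 * m) → V) (j : Fin (2 * m)) (horth : ∀ i, ω ![p j, p i] = 0) :
    wpowF ω m p = 0 := by
  classical
  set W : Submodule ℝ V := Submodule.span ℝ (p '' {i | i ≠ j}) with hW
  by_cases hjW : p j ∈ W
  · -- p j is a combination of the other entries: use multilinearity and alternation
    set ℓ : V →ₗ[ℝ] ℝ :=
      { toFun := fun x => wpowF ω m (Function.update p j x)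
        map_add' := fun a b => AlternatingMap.map_update_add _ _ _ _ _
        map_smul' := fun c a => AlternatingMap.map_update_smul _ _ _ _ _ } with hℓ
    have hgen : ∀ y ∈ (p '' {i | i ≠ j}), ℓ y = 0 := by
      rintro y ⟨i, hi, rfl⟩
      have : Function.update p j (p i) i = Function.update p j (p i) j := by
        rw [Function.update_self, Function.update_of_ne hi]
      exact AlternatingMap.map_eq_zero_of_eq _ _ this hi
    have hker : W ≤ LinearMap.ker ℓ := by
      rw [hW, Submodule.span_le]
      intro y hy
      exact LinearMap.mem_ker.mpr (hgen y hy)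
    have := hker hjW
    rw [LinearMap.mem_ker] at this
    have h2 : ℓ (p j) = wpowF ω m p := by
      show wpowF ω m (Function.update p j (p j)) = _
      rw [Function.update_eq_self]
    rw [← h2, this]
  · obtain ⟨ψ, hψx, hψW⟩ := exists_dual_of_nmem hjW
    set π : V →ₗ[ℝ] V := LinearMap.id - ψ.smulRight (p j) with hπ
    have hπj : π (p j) = 0 := by simp [hπ, hψx]
    have hπi : ∀ i, i ≠ j → π (p i) = p i := by
      intro i hi
      have : ψ (p i) = 0 := hψW _ (Submodule.subset_span ⟨i, hi, rfl⟩)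
      simp [hπ, this]
    have key : wpowF ω m p = wpowF (ω.compLinearMap π) m p := by
      refine wpowF_congr_entries _ _ _ fun a b => ?_
      have htup : ∀ x y : V, (fun i => π (![x, y] i)) = ![π x, π y] := by
        intro x y; funext i; fin_cases i <;> rfl
      rw [AlternatingMap.compLinearMap_apply, htup]
      by_cases ha : a = j
      · subst ha
        rw [hπj, horth b]
        exact (MultilinearMap.map_coord_zero _ 0 (by simp)).symm
      · by_cases hb : b = j
        · have hL : ω ![p a, p j] = 0 := by
            rw [two_form_skew ω (p a) (p j), horth a, neg_zero]
          have hR : ω ![p a, (0:V)] = 0 := MultilinearMap.map_coord_zero _ 1 (by simp)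
          rw [hb, hπj, hπi a ha, hL, hR]
        · rw [hπi a ha, hπi b hb]
    rw [key, ← wpowF_compLinearMap, AlternatingMap.compLinearMap_apply]
    exact MultilinearMap.map_coord_zero _ j (by simp [hπj])

/-- nondegeneracy from non-vanishing top power -/
lemma nondeg_of_wpow_ne_zero [FiniteDimensional ℝ V] {nn : ℕ}
    (hrank : Module.finrank ℝ V = 2 * nn) (ω : V [⋀^Fin (2 : ℕ)]→ₗ[ℝ] ℝ)
    (hpow : wpowF ω nn ≠ 0) {x : V} (hx : x ≠ 0) :
    ∃ y, ω ![x, y] ≠ 0 := by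
  classical
  by_contra hcon
  push_neg at hcon
  apply hpow
  have hind : LinearIndepOn ℝ id ({x} : Set V) := LinearIndepOn.singleton (R := ℝ) (v := id) hx
  set b0 := Module.Basis.extend hind with hb0
  haveI : Fintype (hind.extend (Set.subset_univ ({x} : Set V))) :=
    FiniteDimensional.fintypeBasisIndex b0
  have hcard : Fintype.card (hind.extend (Set.subset_univ ({x} : Set V))) = 2 * nn := by
    rw [← Module.finrank_eq_card_basis b0, hrank]
  set eqv := Fintype.equivFinOfCardEq hcard with heqv
  set b := b0.reindex eqv with hb
  have hxmem : x ∈ hind.extend (Set.subset_univ ({x} : Set V)) :=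
    hind.subset_extend _ rfl
  set j : Fin (2 * nn) := eqv ⟨x, hxmem⟩ with hj
  have hbj : b j = x := by
    rw [hb, Module.Basis.reindex_apply, hj, Equiv.symm_apply_apply, hb0, Module.Basis.extend_apply_self]
  have hzero : wpowF ω nn ⇑b = 0 := by
    refine wpowF_eq_zero_of_orth ω ⇑b j fun i => ?_
    rw [hbj]; exact hcon _
  rw [AlternatingMap.eq_smul_basis_det b (wpowF ω nn), hzero, zero_smul]

end Generic2


set_option maxHeartbeats 2000000 in
/-- contactization of an exact symplectic Lie algebra. -/
theorem stmt5 [FiniteDimensional ℝ L] (n : ℕ) (hn : 0 < n) (H : LieIdeal ℝ L)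
    (hH : Module.finrank ℝ H = 2 * n) (hL : Module.finrank ℝ L = 2 * n + 1)
    (v : L) (hv : v ∉ H)
    (α : Module.Dual ℝ H) (hsymp : wpowF (ceD α) n ≠ 0)
    (w : H) (hw0 : w ≠ 0) (hwPi : α w = 0)
    (hker : ∀ u : H, α u = 0 → ceD α ![w, u] = 0)
    (αp : Module.Dual ℝ L) (hres : ∀ x : H, αp x = α x) (hαpv : αp v = 0) :
    wedgeF (oneAlt αp) (wpowF (ceD αp) n) ≠ 0 ↔ αp ⁅v, (w : L)⁆ ≠ 0 := by
  classical
  obtain ⟨m, rfl⟩ : ∃ m, n = m + 1 := ⟨n - 1, (Nat.succ_pred_eq_of_pos hn).symm⟩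
  haveI : FiniteDimensional ℝ ↥H := inferInstanceAs (FiniteDimensional ℝ ↥(H : Submodule ℝ L))
  -- α is nonzero
  have hα0 : α ≠ 0 := by
    intro hzero
    apply hsymp
    rw [hzero]
    have hω0 : ceD (0 : Module.Dual ℝ ↥H) = 0 := by
      ext z
      show -(0 : Module.Dual ℝ ↥H) ⁅z 0, z 1⁆ = 0
      simp
    rw [hω0]
    show wedgeF (wpowF 0 m) 0 = 0
    exact wedgeF_zero_right _
  obtain ⟨e₀, he₀⟩ : ∃ x, α x ≠ 0 := by
    by_contra h
    push_neg at h
    exact hα0 (LinearMap.ext h)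
  obtain ⟨eH, hαe⟩ : ∃ eE : ↥H, α eE = 1 :=
    ⟨(α e₀)⁻¹ • e₀, by rw [map_smul, smul_eq_mul, inv_mul_cancel₀ he₀]⟩
  set lam : ℝ := -α ⁅w, eH⁆ with hlamdef
  -- the radical formula ω(w, y) = lam * α(y)
  have hωwy : ∀ y : ↥H, -α ⁅w, y⁆ = lam * α y := by
    intro y
    have hmem : α (y - α y • eH) = 0 := by
      rw [map_sub, map_smul, smul_eq_mul, hαe, mul_one, sub_self]
    have h3 : -α ⁅w, y - α y • eH⁆ = 0 := hker _ hmem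
    rw [lie_sub, lie_smul, map_sub, map_smul, smul_eq_mul] at h3
    rw [hlamdef]
    linear_combination h3
  have hlam0 : lam ≠ 0 := by
    intro h0
    obtain ⟨y, hy⟩ := nondeg_of_wpow_ne_zero hH (ceD α) hsymp hw0
    apply hy
    show -α ⁅w, y⁆ = 0
    rw [hωwy y, h0, zero_mul]
  -- the musical isomorphism for ω
  set flat : ↥H →ₗ[ℝ] (↥H →ₗ[ℝ] ℝ) := LinearMap.mk₂ ℝ (fun x y => -α ⁅x, y⁆)
      (fun x x' y => by simp [add_lie]; exact add_comm _ _)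
      (fun c x y => by simp [smul_lie])
      (fun x y y' => by simp [lie_add]; exact add_comm _ _)
      (fun c x y => by simp [lie_smul]) with hflatdef
  have hflatap : ∀ x y : ↥H, flat x y = -α ⁅x, y⁆ := fun x y => rfl
  have hflat_inj : Function.Injective flat := by
    rw [← LinearMap.ker_eq_bot, Submodule.eq_bot_iff]
    intro x hx
    by_contra hx0
    obtain ⟨y, hy⟩ := nondeg_of_wpow_ne_zero hH (ceD α) hsymp hx0
    apply hy
    show -α ⁅x, y⁆ = 0
    rw [← hflatap]
    rw [LinearMap.mem_ker] at hx
    rw [hx, LinearMap.zero_apply]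
  have hflat_surj : Function.Surjective flat :=
    (LinearMap.injective_iff_surjective_of_finrank_eq_finrank
      (Subspace.dual_finrank_eq (K := ℝ) (V := ↥H)).symm).mp hflat_inj
  -- h0 : the ω-dual of the functional y ↦ Ω(v, y)
  set gam : ↥H →ₗ[ℝ] ℝ := -(αp ∘ₗ ((LieAlgebra.ad ℝ L v) ∘ₗ (H : Submodule ℝ L).subtype)) with hgamdef
  have hgamap : ∀ y : ↥H, gam y = -αp ⁅v, (y : L)⁆ := by
    intro y
    rw [hgamdef]
    rfl
  obtain ⟨h0, hh0⟩ := hflat_surj gam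
  have hh0y : ∀ y : ↥H, -α ⁅h0, y⁆ = -αp ⁅v, (y : L)⁆ := by
    intro y
    rw [← hgamap y, ← hh0, hflatap]
  set κ : ℝ := α h0 with hκdef
  set vh : L := v - ↑h0 + κ • ↑eH with hvhdef
  have hαpvh : αp vh = 0 := by
    rw [hvhdef, map_add, map_sub, map_smul, hαpv, hres, hres, hαe, hκdef, smul_eq_mul, mul_one]
    ring
  have hcoeb : ∀ x y : ↥H, αp ⁅(x : L), (y : L)⁆ = α ⁅x, y⁆ := by
    intro x y
    have h := hres ⁅x, y⁆
    rw [← h]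
    exact congrArg αp (LieSubalgebra.coe_bracket (LieIdeal.toLieSubalgebra ℝ L H) x y).symm
  have hΩvhy : ∀ y : ↥H, -αp ⁅vh, (y : L)⁆ = κ * (-α ⁅eH, y⁆) := by
    intro y
    rw [hvhdef, add_lie, sub_lie, smul_lie, map_add, map_sub, map_smul, smul_eq_mul,
      hcoeb h0 y, hcoeb eH y]
    have h3 := hh0y y
    linear_combination -h3

  -- the symplectic complement U of span{eH, w}
  set phiE : ↥H →ₗ[ℝ] ℝ := flat eH with hphiEdef
  have hphiEap : ∀ y, phiE y = -α ⁅eH, y⁆ := fun y => rfl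
  set ψ : ↥H →ₗ[ℝ] (ℝ × ℝ) := LinearMap.prod α phiE with hψdef
  have hψap : ∀ y, ψ y = (α y, phiE y) := fun y => rfl
  have hφw : phiE w = -lam := by
    have h1 : phiE w = α ⁅w, eH⁆ := by rw [hphiEap, ← lie_skew, map_neg, neg_neg]
    rw [h1, hlamdef, neg_neg]
  have hψsurj : Function.Surjective ψ := by
    intro z
    refine ⟨z.1 • eH + (-z.2 / lam) • w, ?_⟩
    have h1 : α (z.1 • eH + (-z.2 / lam) • w) = z.1 := by
      rw [map_add, map_smul, map_smul, hαe, hwPi, smul_eq_mul, smul_eq_mul]; ring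
    have h2 : phiE (z.1 • eH + (-z.2 / lam) • w) = z.2 := by
      have heE : phiE eH = 0 := by rw [hphiEap]; simp
      rw [map_add, map_smul, map_smul, hφw, heE, smul_eq_mul, smul_eq_mul]
      field_simp
      ring
    rw [hψap]
    exact Prod.ext h1 h2
  set U : Submodule ℝ ↥H := LinearMap.ker ψ with hUdef
  have hUrank : 2 * m = Module.finrank ℝ ↥U := by
    have h1 := LinearMap.finrank_range_add_finrank_ker ψ
    rw [LinearMap.range_eq_top.mpr hψsurj, finrank_top] at h1
    have h2 : Module.finrank ℝ (ℝ × ℝ) = 2 := by simp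
    rw [h2, hH] at h1
    rw [hUdef]
    omega
  set uB := Module.finBasis ℝ ↥U with huBdef
  set uH : Fin (2 * m) → ↥H := fun i => ↑(uB (Fin.cast hUrank i)) with huHdef
  have huU : ∀ i, uH i ∈ U := fun i => SetLike.coe_mem _
  have huα : ∀ i, α (uH i) = 0 := by
    intro i
    have h := huU i
    rw [hUdef, LinearMap.mem_ker] at h
    have h2 := congrArg Prod.fst h
    simpa [hψap] using h2
  have huφ : ∀ i, -α ⁅eH, uH i⁆ = 0 := by
    intro i
    have h := huU i
    rw [hUdef, LinearMap.mem_ker] at h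
    have h2 := congrArg Prod.snd h
    rw [hψap] at h2
    rw [← hphiEap]
    simpa using h2
  have hwu : ∀ i, -α ⁅w, uH i⁆ = 0 := fun i => by rw [hωwy, huα, mul_zero]
  -- linear independence and bases
  have hli_u : LinearIndependent ℝ uH := by
    have h1 := (uB.linearIndependent.comp (Fin.cast hUrank) (Fin.cast_injective _))
    exact h1.map' U.subtype (Submodule.ker_subtype U)
  have hspan_u_le : Submodule.span ℝ (Set.range uH) ≤ U := by
    rw [Submodule.span_le]
    rintro x ⟨i, rfl⟩
    exact huU i
  have hw_notin : w ∉ Submodule.span ℝ (Set.range uH) := by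
    intro hmem
    have hwU := hspan_u_le hmem
    rw [hUdef, LinearMap.mem_ker] at hwU
    have h2 := congrArg Prod.snd hwU
    rw [hψap] at h2
    simp only [Prod.snd_zero] at h2
    rw [hφw] at h2
    exact hlam0 (neg_eq_zero.mp h2)
  have hli_uw : LinearIndependent ℝ (Fin.snoc uH w : Fin (2*m+1) → ↥H) :=
    linearIndependent_fin_snoc.mpr ⟨hli_u, hw_notin⟩
  have hsnocrange : ∀ x ∈ Set.range (Fin.snoc uH w : Fin (2*m+1) → ↥H), α x = 0 := by
    rintro x ⟨i, rfl⟩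
    refine Fin.lastCases ?_ (fun j => ?_) i
    · rw [Fin.snoc_last]; exact hwPi
    · rw [Fin.snoc_castSucc]; exact huα j
  have he_notin : eH ∉ Submodule.span ℝ (Set.range (Fin.snoc uH w : Fin (2*m+1) → ↥H)) := by
    intro hmem
    have hle : Submodule.span ℝ (Set.range (Fin.snoc uH w : Fin (2*m+1) → ↥H))
        ≤ LinearMap.ker α := by
      rw [Submodule.span_le]
      intro x hx
      exact LinearMap.mem_ker.mpr (hsnocrange x hx)
    have h2 := hle hmem
    rw [LinearMap.mem_ker, hαe] at h2
    exact one_ne_zero h2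
  set yH : Fin (2*(m+1)) → ↥H := Fin.snoc (n := 2*m+1) (Fin.snoc uH w) eH with hyHdef
  have hli_yH : LinearIndependent ℝ yH :=
    linearIndependent_fin_snoc.mpr ⟨hli_uw, he_notin⟩
  obtain ⟨ybasisH, hybH⟩ : ∃ b : Module.Basis (Fin (2*(m+1))) ℝ ↥H, ⇑b = yH :=
    ⟨basisOfLinearIndependentOfCardEqFinrank hli_yH (by rw [Fintype.card_fin, hH]),
      coe_basisOfLinearIndependentOfCardEqFinrank _ _⟩
  -- the L-side tuples
  set uL : Fin (2*m) → L := fun i => ↑(uH i) with huLdef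
  set wL : L := ↑w with hwLdef
  set eL : L := ↑eH with heLdef
  set zG : Fin (2*(m+1)) → L := Fin.snoc (n := 2*m+1) (Fin.snoc uL wL) vh with hzGdef
  set zE : Fin (2*(m+1)) → L := Fin.snoc (n := 2*m+1) (Fin.snoc uL wL) eL with hzEdef
  have hcomp1 : (fun x : ↥H => (x : L)) ∘ (Fin.snoc uH w) = Fin.snoc uL wL := by
    rw [Fin.comp_snoc]
    rfl
  have hli_uwL : LinearIndependent ℝ (Fin.snoc uL wL : Fin (2*m+1) → L) := by
    have h1 := hli_uw.map' (H : Submodule ℝ L).subtype (Submodule.ker_subtype _)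
    have h2 : ⇑(H : Submodule ℝ L).subtype ∘ (Fin.snoc uH w)
        = (Fin.snoc uL wL : Fin (2*m+1) → L) := by
      funext i
      refine Fin.lastCases ?_ (fun j => ?_) i
      · simp only [Function.comp_apply, Fin.snoc_last]
        exact congrArg Subtype.val (Fin.snoc_last (α := fun _ => ↥H) (p := uH) (x := w))
      · simp only [Function.comp_apply, Fin.snoc_castSucc]
        exact congrArg Subtype.val (Fin.snoc_castSucc (α := fun _ => ↥H) (i := j) (p := uH) (x := w))
    rw [← h2]
    exact h1
  have hvh_notin : vh ∉ Submodule.span ℝ (Set.range (Fin.snoc uL wL : Fin (2*m+1) → L)) := by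
    intro hmem
    have hle : Submodule.span ℝ (Set.range (Fin.snoc uL wL : Fin (2*m+1) → L))
        ≤ (H : Submodule ℝ L) := by
      rw [Submodule.span_le]
      rintro x ⟨i, rfl⟩
      refine Fin.lastCases ?_ (fun j => ?_) i
      · rw [Fin.snoc_last, hwLdef]; exact SetLike.coe_mem w
      · rw [Fin.snoc_castSucc, huLdef]; exact SetLike.coe_mem (uH j)
    have hvhH := hle hmem
    have hvH : v ∈ (H : Submodule ℝ L) := by
      have hveq : v = vh + ↑h0 - κ • ↑eH := by rw [hvhdef]; abel
      rw [hveq]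
      exact Submodule.sub_mem _ (Submodule.add_mem _ hvhH (SetLike.coe_mem h0))
        (Submodule.smul_mem _ _ (SetLike.coe_mem eH))
    exact hv hvH
  have hli_zG : LinearIndependent ℝ zG := by
    rw [hzGdef]
    exact linearIndependent_fin_snoc.mpr ⟨hli_uwL, hvh_notin⟩
  have hαpzG : ∀ j, αp (zG j) = 0 := by
    intro j
    rw [hzGdef]
    refine Fin.lastCases (n := 2*m+1) ?_ (fun j' => ?_) j
    · rw [Fin.snoc_last]; exact hαpvh
    · rw [Fin.snoc_castSucc]
      refine Fin.lastCases (n := 2*m) ?_ (fun i => ?_) j'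
      · rw [Fin.snoc_last, hwLdef, hres, hwPi]
      · rw [Fin.snoc_castSucc, huLdef, hres, huα]
  have heL_notin : eL ∉ Submodule.span ℝ (Set.range zG) := by
    intro hmem
    have hle : Submodule.span ℝ (Set.range zG) ≤ LinearMap.ker αp := by
      rw [Submodule.span_le]
      rintro x ⟨j, rfl⟩
      exact LinearMap.mem_ker.mpr (hαpzG j)
    have h2 := hle hmem
    rw [LinearMap.mem_ker, heLdef, hres, hαe] at h2
    exact one_ne_zero h2
  have hli_cons : LinearIndependent ℝ (Fin.cons eL zG : Fin (2*(m+1)+1) → L) :=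
    linearIndependent_fin_cons.mpr ⟨hli_zG, heL_notin⟩
  set zfull : Fin (1 + 2*(m+1)) → L := Fin.append ![eL] zG with hzfulldef
  have hcastidx : 1 + 2*(m+1) = 2*(m+1)+1 := by omega
  have hzfull_eq : zfull = (Fin.cons eL zG : Fin (2*(m+1)+1) → L) ∘ (Fin.cast hcastidx) := by
    funext i
    rw [hzfulldef]
    refine Fin.addCases (fun j => ?_) (fun j => ?_) i
    · rw [Fin.append_left]
      have hj : j = 0 := Subsingleton.elim _ _
      subst hj
      simp only [Function.comp_apply]
      have hidx : (Fin.cast hcastidx (Fin.castAdd (2*(m+1)) (0 : Fin 1)))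
          = (0 : Fin (2*(m+1)+1)) := by ext; simp
      rw [hidx, Fin.cons_zero]
      rfl
    · rw [Fin.append_right]
      simp only [Function.comp_apply]
      have hidx : Fin.cast hcastidx (Fin.natAdd 1 j) = Fin.succ j := by
        ext
        simp [Nat.add_comm]
      rw [hidx, Fin.cons_succ]
  have hli_zfull : LinearIndependent ℝ zfull := by
    rw [hzfull_eq]
    exact hli_cons.comp _ (Fin.cast_injective _)
  obtain ⟨zbasis, hzb⟩ : ∃ b : Module.Basis (Fin (1 + 2*(m+1))) ℝ L, ⇑b = zfull :=
    ⟨basisOfLinearIndependentOfCardEqFinrank hli_zfull (by rw [Fintype.card_fin, hL]; omega),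
      coe_basisOfLinearIndependentOfCardEqFinrank _ _⟩

  -- pair values of the 2-form on the chosen entries
  set c : ℝ := αp ⁅v, wL⁆ with hcdef
  have hΩwu : ∀ i, -αp ⁅wL, uL i⁆ = 0 := by
    intro i
    rw [hcoeb w (uH i)]
    exact hwu i
  have hΩwe : -αp ⁅wL, eL⁆ = lam := by
    rw [hcoeb w eH]
  have hΩeu : ∀ i, -αp ⁅eL, uL i⁆ = 0 := by
    intro i
    rw [hcoeb eH (uH i)]
    exact huφ i
  have hΩwvh : -αp ⁅wL, vh⁆ = c := by
    rw [hvhdef, lie_add, lie_sub, lie_smul, map_add, map_sub, map_smul, smul_eq_mul]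
    have h1 : αp ⁅wL, v⁆ = -c := by
      rw [← lie_skew wL v, map_neg, hcdef]
    have h2 : αp ⁅wL, (↑h0 : L)⁆ = -(lam * κ) := by
      rw [hcoeb w h0]
      have h3 := hωwy h0
      rw [← hκdef] at h3
      linear_combination -h3
    have h3 : αp ⁅wL, (↑eH : L)⁆ = -lam := by
      rw [hcoeb w eH]
      linear_combination -hlamdef
    rw [h1, h2, h3]
    ring
  have hΩvhu : ∀ i, -αp ⁅vh, uL i⁆ = 0 := by
    intro i
    rw [hΩvhy (uH i), huφ i, mul_zero]
  -- evaluation of the contact form at the basis via the split lemma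
  have hvan : ∀ σ : Equiv.Perm (Fin 1 ⊕ Fin (2*(m+1))), (∃ i j, σ (Sum.inl i) = Sum.inr j) →
      oneAlt αp (fun i => zfull (finSumFinEquiv (σ (Sum.inl i)))) = 0 ∨
      wpowF (ceD αp) (m+1) (fun j => zfull (finSumFinEquiv (σ (Sum.inr j)))) = 0 := by
    rintro σ ⟨i, j, hij⟩
    left
    have hi : i = 0 := Subsingleton.elim _ _
    rw [hi] at hij
    show αp (zfull (finSumFinEquiv (σ (Sum.inl 0)))) = 0
    rw [hij, finSumFinEquiv_apply_right]
    rw [hzfulldef, Fin.append_right]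
    exact hαpzG j
  have hsplit : wedgeF (oneAlt αp) (wpowF (ceD αp) (m+1)) zfull
      = wpowF (ceD αp) (m+1) zG := by
    have h := wedgeF_split (oneAlt αp) (wpowF (ceD αp) (m+1)) zfull hvan
    rw [h]
    have h2 : (fun j => zfull (Fin.natAdd 1 j)) = zG := by
      funext j
      rw [hzfulldef, Fin.append_right]
    rw [h2]
    have h1 : oneAlt αp (fun i : Fin 1 => zfull (Fin.castAdd (2*(m+1)) i)) = 1 := by
      show αp (zfull (Fin.castAdd (2*(m+1)) 0)) = 1
      rw [hzfulldef, Fin.append_left]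
      show αp eL = 1
      rw [heLdef, hres, hαe]
    rw [h1, one_mul]
  -- the comparison vector r and its orthogonality
  set r : L := lam • vh - c • eL with hrdef
  have hr_u : ∀ i, -αp ⁅r, uL i⁆ = 0 := by
    intro i
    rw [hrdef, sub_lie, smul_lie, smul_lie, map_sub, map_smul, map_smul, smul_eq_mul,
      smul_eq_mul, neg_eq_zero.mp (hΩvhu i), neg_eq_zero.mp (hΩeu i), mul_zero, mul_zero,
      sub_zero, neg_zero]
  have hr_w : -αp ⁅r, wL⁆ = 0 := by
    rw [hrdef, sub_lie, smul_lie, smul_lie, map_sub, map_smul, map_smul, smul_eq_mul,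
      smul_eq_mul]
    have h1 : αp ⁅vh, wL⁆ = c := by
      rw [← lie_skew vh wL, map_neg]
      linear_combination hΩwvh
    have h2 : αp ⁅eL, wL⁆ = lam := by
      rw [← lie_skew eL wL, map_neg]
      linear_combination hΩwe
    rw [h1, h2]
    ring
  have hr_r : -αp ⁅r, r⁆ = 0 := by simp
  -- vanishing of the power at the r-tuple
  have hPzero : wpowF (ceD αp) (m+1) (Fin.snoc (n := 2*m+1) (Fin.snoc uL wL) r : Fin (2*(m+1)) → L) = 0 := by
    refine wpowF_eq_zero_of_orth _ _ (Fin.last (2*m+1)) ?_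
    intro i
    simp only [Fin.snoc_last]
    refine Fin.lastCases (n := 2*m+1) ?_ (fun j => ?_) i
    · simp only [Fin.snoc_last]
      exact hr_r
    · simp only [Fin.snoc_castSucc]
      refine Fin.lastCases (n := 2*m) ?_ (fun i' => ?_) j
      · simp only [Fin.snoc_last]
        exact hr_w
      · simp only [Fin.snoc_castSucc]
        exact hr_u i'
  -- multilinearity in the last slot
  have hupd : ∀ x : L, (Fin.snoc (n := 2*m+1) (Fin.snoc uL wL) x : Fin (2*(m+1)) → L)
      = Function.update zG (Fin.last (2*m+1)) x := by
    intro x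
    funext i
    refine Fin.lastCases (n := 2*m+1) ?_ (fun j => ?_) i
    · rw [Function.update_self]
      exact Fin.snoc_last _ _
    · rw [Function.update_of_ne (Fin.castSucc_lt_last j).ne]
      rw [hzGdef]
      simp only [Fin.snoc_castSucc]
  have hlin : wpowF (ceD αp) (m+1) (Fin.snoc (n := 2*m+1) (Fin.snoc uL wL) r : Fin (2*(m+1)) → L)
      = lam * wpowF (ceD αp) (m+1) zG - c * wpowF (ceD αp) (m+1) zE := by
    rw [hupd r, hrdef]
    calc (wpowF (ceD αp) (m+1)) (Function.update zG (Fin.last (2*m+1)) (lam • vh - c • eL))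
        = (wpowF (ceD αp) (m+1)).toMultilinearMap
            (Function.update zG (Fin.last (2*m+1)) (lam • vh - c • eL)) := rfl
      _ = (wpowF (ceD αp) (m+1)).toMultilinearMap
            (Function.update zG (Fin.last (2*m+1)) (lam • vh))
          - (wpowF (ceD αp) (m+1)).toMultilinearMap
            (Function.update zG (Fin.last (2*m+1)) (c • eL)) :=
          MultilinearMap.map_update_sub _ _ _ _ _
      _ = lam • (wpowF (ceD αp) (m+1)).toMultilinearMap
            (Function.update zG (Fin.last (2*m+1)) vh)
          - c • (wpowF (ceD αp) (m+1)).toMultilinearMap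
            (Function.update zG (Fin.last (2*m+1)) eL) := by
          rw [MultilinearMap.map_update_smul, MultilinearMap.map_update_smul]
      _ = lam * wpowF (ceD αp) (m+1) (Function.update zG (Fin.last (2*m+1)) vh)
          - c * wpowF (ceD αp) (m+1) (Function.update zG (Fin.last (2*m+1)) eL) := rfl
      _ = lam * wpowF (ceD αp) (m+1) zG - c * wpowF (ceD αp) (m+1) zE := by
          rw [← hupd vh, ← hupd eL, ← hzGdef, ← hzEdef]
  have hmain : lam * wpowF (ceD αp) (m+1) zG = c * wpowF (ceD αp) (m+1) zE := by
    have h := hlin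
    rw [hPzero] at h
    linarith
  -- pulling back to H : the hsymp value
  have hpull : ceD α = (ceD αp).compLinearMap (H : Submodule ℝ L).subtype := by
    ext z
    show -α ⁅z 0, z 1⁆ = -αp ⁅((z 0 : ↥H) : L), ((z 1 : ↥H) : L)⁆
    rw [hcoeb]
  have hTE : wpowF (ceD αp) (m+1) zE ≠ 0 := by
    have hyval : wpowF (ceD α) (m+1) yH ≠ 0 := by
      intro h0'
      apply hsymp
      rw [AlternatingMap.eq_smul_basis_det ybasisH (wpowF (ceD α) (m+1)), hybH, h0',
        zero_smul]
    have htrans : wpowF (ceD α) (m+1) yH = wpowF (ceD αp) (m+1) zE := by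
      rw [hpull]
      refine Eq.trans (congrArg (fun f => f yH)
        (wpowF_compLinearMap (ceD αp) (H : Submodule ℝ L).subtype (m+1))).symm ?_
      show wpowF (ceD αp) (m+1) (fun i => ((yH i : ↥H) : L)) = _
      congr 1
      funext i
      rw [hyHdef, hzEdef]
      refine Fin.lastCases (n := 2*m+1) ?_ (fun j => ?_) i
      · rw [Fin.snoc_last, Fin.snoc_last]
      · rw [Fin.snoc_castSucc, Fin.snoc_castSucc]
        refine Fin.lastCases (n := 2*m) ?_ (fun i' => ?_) j
        · rw [Fin.snoc_last, Fin.snoc_last]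
        · rw [Fin.snoc_castSucc, Fin.snoc_castSucc]
    rw [← htrans]
    exact hyval
  -- conclusion
  constructor
  · intro hβ hc0
    apply hβ
    rw [AlternatingMap.eq_smul_basis_det zbasis (wedgeF (oneAlt αp) (wpowF (ceD αp) (m+1))),
      hzb, hsplit]
    have hTL0 : wpowF (ceD αp) (m+1) zG = 0 := by
      rw [hc0, zero_mul] at hmain
      exact (mul_eq_zero.mp hmain).resolve_left hlam0
    rw [hTL0, zero_smul]
  · intro hc hβ0
    have hz0 : wedgeF (oneAlt αp) (wpowF (ceD αp) (m+1)) zfull = 0 := by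
      rw [hβ0]
      simp
    rw [hsplit] at hz0
    rw [hz0, mul_zero] at hmain
    exact hTE ((mul_eq_zero.mp hmain.symm).resolve_left hc)
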